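/- Let D be a nonempty finite set, let r ≥ 2 and l ≥ 1 be integers, and let g be a real number with g ≥ 1 + l/(r−1). Let α : D → Fin r → ℝ satisfy, for every x ∈ D, 0 ≤ α x 0 < α x 1 < ⋯ < α x (r−1) < 1. Let r' be an integer with 0 < r' < r, set r'' = r − r', and let n' : D → Fin r → ℕ take values in {0,1} with Σ_i n' x i = r' for every x ∈ D; set n'' x i = 1 − n' x i. Then r''·(Σ_{x∈D} Σ_i (n' x i)·(α x i)) − r'·(Σ_{x∈D} Σ_i (n'' x i)·(α x i)) ≤ r'·r''·(g − 1) + Σ_{x∈D} Σ_{i>j} (n' x i)·(n'' x j) − l. -/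
import Mathlib


theorem stmt_0 {D : Type*} [Fintype D] [Nonempty D]
    (r l : ℕ) (hr : 2 ≤ r) (hl : 1 ≤ l)
    (g : ℝ) (hg : 1 + (l : ℝ) / ((r : ℝ) - 1) ≤ g)
    (α : D → Fin r → ℝ)
    (hα0 : ∀ x : D, 0 ≤ α x ⟨0, by omega⟩)
    (hαmono : ∀ x : D, StrictMono (α x))
    (hα1 : ∀ x : D, α x ⟨r - 1, by omega⟩ < 1)
    (r' r'' : ℕ) (hr'0 : 0 < r') (hr'r : r' < r) (hr'' : r'' = r - r')
    (n' n'' : D → Fin r → ℕ)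
    (hn01 : ∀ (x : D) (i : Fin r), n' x i = 0 ∨ n' x i = 1)
    (hsum : ∀ x : D, ∑ i, n' x i = r')
    (hn'' : ∀ (x : D) (i : Fin r), n'' x i = 1 - n' x i) :
    (r'' : ℝ) * (∑ x : D, ∑ i, (n' x i : ℝ) * α x i)
      - (r' : ℝ) * (∑ x : D, ∑ i, (n'' x i : ℝ) * α x i)
      ≤ (r' : ℝ) * (r'' : ℝ) * (g - 1)
        + (∑ x : D, ∑ i : Fin r, ∑ j ∈ Finset.univ.filter (fun j => j < i),
            (n' x i : ℝ) * (n'' x j : ℝ))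
        - (l : ℝ) := by
  have hrpos : 0 < r := by omega
  have hα_nonneg : ∀ (x : D) (i : Fin r), 0 ≤ α x i := by
    intro x i
    refine le_trans (hα0 x) ((hαmono x).monotone ?_)
    exact Fin.mk_le_of_le_val (Nat.zero_le _)
  have hα_lt1 : ∀ (x : D) (i : Fin r), α x i < 1 := by
    intro x i
    refine lt_of_le_of_lt ((hαmono x).monotone ?_) (hα1 x)
    have := i.isLt
    exact Fin.le_def.mpr (by simp; omega)
  have hpair : ∀ (x : D) (i : Fin r), (n'' x i : ℝ) + (n' x i : ℝ) = 1 := by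
    intro x i
    rcases hn01 x i with h | h <;> simp [hn'' x i, h]
  have hn'le1 : ∀ (x : D) (i : Fin r), (n' x i : ℝ) ≤ 1 := by
    intro x i; rcases hn01 x i with h | h <;> simp [h]
  have hn'sum : ∀ x : D, (∑ i, (n' x i : ℝ)) = (r' : ℝ) := by
    intro x
    rw [← Nat.cast_sum]
    exact_mod_cast congrArg Nat.cast (hsum x)
  have hcast : (r'' : ℝ) = (r : ℝ) - (r' : ℝ) := by
    rw [hr'']; exact_mod_cast Nat.cast_sub hr'r.le
  have hn''sum : ∀ x : D, (∑ i, (n'' x i : ℝ)) = (r'' : ℝ) := by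
    intro x
    have : (∑ i, (n'' x i : ℝ)) = ∑ i : Fin r, (1 - (n' x i : ℝ)) := by
      refine Finset.sum_congr rfl fun i _ => ?_
      have := hpair x i; linarith
    rw [this, Finset.sum_sub_distrib, hn'sum, Finset.sum_const, Finset.card_univ]
    simp [hcast]
  -- per-point bound
  have key : ∀ x : D,
      (r'' : ℝ) * (∑ i, (n' x i : ℝ) * α x i) - (r' : ℝ) * (∑ i, (n'' x i : ℝ) * α x i)
      ≤ ∑ i : Fin r, ∑ j ∈ Finset.univ.filter (fun j => j < i),
          (n' x i : ℝ) * (n'' x j : ℝ) := by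
    intro x
    have e1 : (∑ i : Fin r, ∑ j : Fin r,
            (n' x i : ℝ) * (n'' x j : ℝ) * (α x i - α x j))
        = (r'' : ℝ) * (∑ i, (n' x i : ℝ) * α x i)
        - (r' : ℝ) * (∑ i, (n'' x i : ℝ) * α x i) := by
      have step : ∀ i : Fin r, (∑ j : Fin r, (n' x i : ℝ) * (n'' x j : ℝ) * (α x i - α x j))
          = (n' x i : ℝ) * α x i * (r'' : ℝ)
            - (n' x i : ℝ) * (∑ j, (n'' x j : ℝ) * α x j) := by
        intro i
        rw [← hn''sum x, Finset.mul_sum, Finset.mul_sum, ← Finset.sum_sub_distrib]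
        exact Finset.sum_congr rfl fun j _ => by ring
      rw [Finset.sum_congr rfl fun i _ => step i, Finset.sum_sub_distrib,
        ← Finset.sum_mul, ← Finset.sum_mul, hn'sum x]
      ring
    rw [← e1]
    refine Finset.sum_le_sum fun i _ => ?_
    rw [Finset.sum_filter]
    refine Finset.sum_le_sum fun j _ => ?_
    by_cases hji : j < i
    · simp only [hji, if_true]
      have h1 : α x i - α x j ≤ 1 := by
        have := hα_nonneg x j; have := hα_lt1 x i; linarith
      have h2 : (0:ℝ) ≤ (n' x i : ℝ) * (n'' x j : ℝ) := by positivity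
      nlinarith
    · simp only [hji, if_false]
      rcases eq_or_lt_of_le (not_lt.mp hji) with h | h
    
      · subst h
        have h0 : (n' x i : ℝ) * (n'' x i : ℝ) = 0 := by
          rcases hn01 x i with h0 | h0 <;> simp [hn'' x i, h0]
        nlinarith [hα_nonneg x i]
      · have hαij : α x i - α x j ≤ 0 := by
          have := hαmono x h; linarith
        have h2 : (0:ℝ) ≤ (n' x i : ℝ) * (n'' x j : ℝ) := by positivity
        nlinarith
  -- combine
  have hsum_key : (r'' : ℝ) * (∑ x : D, ∑ i, (n' x i : ℝ) * α x i)
      - (r' : ℝ) * (∑ x : D, ∑ i, (n'' x i : ℝ) * α x i)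
      ≤ ∑ x : D, ∑ i : Fin r, ∑ j ∈ Finset.univ.filter (fun j => j < i),
          (n' x i : ℝ) * (n'' x j : ℝ) := by
    rw [Finset.mul_sum, Finset.mul_sum, ← Finset.sum_sub_distrib]
    exact Finset.sum_le_sum fun x _ => key x
  have hlle : (l : ℝ) ≤ (r' : ℝ) * (r'' : ℝ) * (g - 1) := by
    have hrr : (r : ℝ) - 1 ≥ 1 := by
      have : (2:ℝ) ≤ r := by exact_mod_cast hr
      linarith
    have hprod : (r : ℝ) - 1 ≤ (r' : ℝ) * (r'' : ℝ) := by
      have h1 : (1:ℝ) ≤ r' := by exact_mod_cast hr'0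
      have h2 : (1:ℝ) ≤ r'' := by
        have : 1 ≤ r'' := by omega
        exact_mod_cast this
      nlinarith [hcast]
    have hlpos : (0:ℝ) ≤ (l:ℝ) := Nat.cast_nonneg l
    have hgl : (l : ℝ) / ((r:ℝ) - 1) ≤ g - 1 := by linarith
    have hdiv : (l : ℝ) = ((r:ℝ) - 1) * ((l:ℝ) / ((r:ℝ)-1)) := by
      field_simp
    have hq : 0 ≤ (l:ℝ) / ((r:ℝ)-1) := by positivity
    nlinarith
  linarith
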